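/- Let x, y ∈ I, let z₁ ∈ I be a nonempty word, and let u ∈ ∂I be an infinite word whose first letter equals the last letter of z₁; set w = z₁u ∈ ∂I. Then for every n ≥ |z₁| one has dim_q(x[w]_n)/dim_q(y[w]_n) = dim_q(xz₁)/dim_q(yz₁); in particular D_w(x, y) = dim_q(xz₁)/dim_q(yz₁). -/

import Mathlib

open Filter Topology MeasureTheory

/-- Words in the free monoid on two letters `α = true`, `β = false`. -/
abbrev Word := List Bool

/-- Conjugation: reverse the word and swap the two letters. -/
def wconj (x : Word) : Word := x.reverse.map (fun b => !b)

/-- Fusion multiplicity `m(z; x, y)`: the number of triples `(x₀, w, y₀)` with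
`x = x₀w`, `y = w̄y₀` and `z = x₀y₀`. -/
def fm (x y z : Word) : ℕ :=
  ((Finset.range (x.length + 1)).filter (fun k =>
    wconj (x.drop k) <+: y ∧ z = x.take k ++ y.drop (x.length - k))).card

/-- Maximal alternating blocks of a word. -/
def blocks : Word → List Word
  | [] => []
  | a :: rest =>
    match blocks rest with
    | [] => [[a]]
    | b :: bs => if b.head? = some a then [a] :: b :: bs else (a :: b) :: bs

/-- The quantum integer `[n]_q = (qⁿ - q⁻ⁿ)/(q - q⁻¹)`. -/
noncomputable def qnum (q : ℝ) (n : ℕ) : ℝ := (q ^ n - q⁻¹ ^ n) / (q - q⁻¹)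

/-- Quantum dimension `dim_q(x) = ∏ᵢ [|xᵢ|+1]_q` over the maximal alternating blocks. -/
noncomputable def dimq (q : ℝ) (x : Word) : ℝ :=
  ((blocks x).map (fun b => qnum q (b.length + 1))).prod

/-- Classical dimension `dim₁(x) = ∏ᵢ (|xᵢ|+1)` over the maximal alternating blocks. -/
def dim1 (x : Word) : ℕ := ((blocks x).map (fun b => b.length + 1)).prod
/-- The word `[w]_n` formed by the first `n` letters of an infinite word `w ∈ ∂I`. -/
def bprefix (w : ℕ → Bool) (n : ℕ) : Word := (List.range n).map w

/-- `D_w(x, y) = lim_n dim_q(x[w]_n)/dim_q(y[w]_n)` for `x, y ∈ I` and `w ∈ ∂I`. -/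
noncomputable def Dw (q : ℝ) (x y : Word) (w : ℕ → Bool) : ℝ :=
  limUnder atTop (fun n => dimq q (x ++ bprefix w n) / dimq q (y ++ bprefix w n))

/-- Concatenation of a finite word with an infinite word. -/
def bcat (z : Word) (u : ℕ → Bool) : ℕ → Bool :=
  fun n => if n < z.length then z.getD n false else u (n - z.length)

/-- The strictly alternating infinite word starting with the letter `a`. -/
def walt (a : Bool) : ℕ → Bool := fun n => if n % 2 = 0 then a else !a

/-- `(x|w)`: the length of the longest common prefix of a finite word `x` and an
infinite word `w`. -/
def cpb : Word → (ℕ → Bool) → ℕ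
  | [], _ => 0
  | a :: xs, w => if a = w 0 then cpb xs (fun n => w (n + 1)) + 1 else 0


lemma blocks_cons' (a : Bool) (w : Word) : blocks (a :: w) =
    match blocks w with
    | [] => [[a]]
    | b :: bs => if b.head? = some a then [a] :: b :: bs else (a :: b) :: bs := rfl

lemma blocks_head (a : Bool) (w : Word) :
    ∃ b bs, blocks (a :: w) = b :: bs ∧ b.head? = some a := by
  rw [blocks_cons']
  rcases hb : blocks w with _ | ⟨b, bs⟩
  · exact ⟨[a], [], rfl, rfl⟩
  · by_cases h : b.head? = some a
    · exact ⟨[a], b :: bs, by simp [h], rfl⟩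
    · exact ⟨a :: b, bs, by simp [h], rfl⟩

lemma blocks_append : ∀ (a b : Word) (ha : a ≠ []), b ≠ [] →
    b.head? = some (a.getLast ha) → blocks (a ++ b) = blocks a ++ blocks b
  | [], _, ha, _, _ => absurd rfl ha
  | [c], b, _, hb, hh => by
    obtain ⟨d, b', rfl⟩ := List.exists_cons_of_ne_nil hb
    simp at hh
    subst hh
    obtain ⟨p, ps, hp, hph⟩ := blocks_head d b'
    simp only [List.singleton_append, blocks_cons', hp, hph, if_pos rfl]
    rfl
  | c :: d :: a', b, _, hb, hh => by
    have ih := blocks_append (d :: a') b (by simp) hb (by simpa using hh)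
    obtain ⟨p, ps, hp, hph⟩ := blocks_head d a'
    rw [List.cons_append, blocks_cons', ih, hp, blocks_cons', hp]
    by_cases h : p.head? = some c <;> simp [h]

lemma qnum_pos (q : ℝ) (hq0 : 0 < q) (hq1 : q < 1) (n : ℕ) : 0 < qnum q (n + 1) := by
  have h1 : 1 < q⁻¹ := one_lt_inv₀ hq0 |>.mpr hq1
  have h2 : q < q⁻¹ := hq1.trans h1
  have h3 : q ^ (n+1) < q⁻¹ ^ (n+1) := pow_lt_pow_left₀ h2 hq0.le (by omega)
  have h4 : q - q⁻¹ < 0 := by linarith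
  exact div_pos_of_neg_of_neg (by linarith) h4

lemma dimq_pos (q : ℝ) (hq0 : 0 < q) (hq1 : q < 1) (w : Word) : 0 < dimq q w := by
  apply List.prod_pos
  intro r hr
  simp only [List.mem_map] at hr
  obtain ⟨b, -, rfl⟩ := hr
  exact qnum_pos q hq0 hq1 _

lemma dimq_append (q : ℝ) (a b : Word) (ha : a ≠ []) (hb : b ≠ [])
    (hh : b.head? = some (a.getLast ha)) :
    dimq q (a ++ b) = dimq q a * dimq q b := by
  unfold dimq
  rw [blocks_append a b ha hb hh, List.map_append, List.prod_append]

lemma bprefix_bcat (z : Word) (u : ℕ → Bool) (n : ℕ) (h : z.length ≤ n) :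
    bprefix (bcat z u) n = z ++ bprefix u (n - z.length) := by
  apply List.ext_getElem
  · simp [bprefix]; omega
  · intro i h1 h2
    simp only [bprefix, List.getElem_map, List.getElem_range, bcat]
    by_cases hi : i < z.length
    · rw [List.getElem_append_left hi, if_pos hi, List.getD_eq_getElem z false hi]
    · rw [List.getElem_append_right (by omega), if_neg hi]
      simp

lemma bprefix_head (u : ℕ → Bool) (m : ℕ) (hm : 0 < m) :
    (bprefix u m).head? = some (u 0) := by
  obtain ⟨k, rfl⟩ := Nat.exists_eq_add_of_lt hm
  simp only [bprefix]
  rw [List.range_succ_eq_map]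
  rfl

/-- If `z₁ ∈ I` is nonempty and `u ∈ ∂I` starts with the last letter of
`z₁`, then for `w = z₁u` and all `n ≥ |z₁|`,
`dim_q(x[w]_n)/dim_q(y[w]_n) = dim_q(xz₁)/dim_q(yz₁)`; in particular
`D_w(x, y) = dim_q(xz₁)/dim_q(yz₁)`. -/
theorem Dw_eventually_constant (q : ℝ) (hq0 : 0 < q) (hq1 : q < 1)
    (x y z₁ : Word) (hz : z₁ ≠ []) (u : ℕ → Bool) (hu : u 0 = z₁.getLast hz) :
    (∀ n : ℕ, z₁.length ≤ n →
      dimq q (x ++ bprefix (bcat z₁ u) n) / dimq q (y ++ bprefix (bcat z₁ u) n) =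
        dimq q (x ++ z₁) / dimq q (y ++ z₁)) ∧
    Dw q x y (bcat z₁ u) = dimq q (x ++ z₁) / dimq q (y ++ z₁) := by
  have key : ∀ n : ℕ, z₁.length ≤ n →
      dimq q (x ++ bprefix (bcat z₁ u) n) / dimq q (y ++ bprefix (bcat z₁ u) n) =
        dimq q (x ++ z₁) / dimq q (y ++ z₁) := by
    intro n hn
    rw [bprefix_bcat z₁ u n hn]
    rcases Nat.eq_or_lt_of_le hn with h | h
    · rw [← h]
      simp [bprefix]
    · set p := bprefix u (n - z₁.length) with hp
      have hm : 0 < n - z₁.length := by omega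
      have hhead : p.head? = some (u 0) := bprefix_head u _ hm
      have hne : p ≠ [] := by
        intro h0; rw [h0] at hhead; simp at hhead
      have hlast : ∀ v : Word, ∃ hv : v ++ z₁ ≠ [],
          (v ++ z₁).getLast hv = z₁.getLast hz := by
        intro v
        refine ⟨by simp [hz], ?_⟩
        exact List.getLast_append_of_ne_nil _ hz
      have hd : ∀ v : Word, dimq q (v ++ (z₁ ++ p)) = dimq q (v ++ z₁) * dimq q p := by
        intro v
        obtain ⟨hv, hvl⟩ := hlast v
        rw [← List.append_assoc]
        exact dimq_append q (v ++ z₁) p hv hne (by rw [hhead, hu, hvl])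
      rw [hd x, hd y, mul_div_mul_right _ _ (ne_of_gt (dimq_pos q hq0 hq1 p))]
  refine ⟨key, ?_⟩
  have tend : Tendsto (fun n => dimq q (x ++ bprefix (bcat z₁ u) n) /
      dimq q (y ++ bprefix (bcat z₁ u) n)) atTop
      (𝓝 (dimq q (x ++ z₁) / dimq q (y ++ z₁))) := by
    apply Tendsto.congr' _ tendsto_const_nhds
    filter_upwards [eventually_ge_atTop z₁.length] with n hn
    exact (key n hn).symm
  exact tend.limUnder_eq
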